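/- Let n ≥ 3 and let R : (Fin n)⁴ → ℝ be a tensor with Riemann symmetries: R_{abcd} = −R_{bacd} = −R_{abdc}, R_{abcd} = R_{cdab}, and R_{abcd} + R_{acdb} + R_{adbc} = 0. Define the Ricci tensor Ric_{ab} = Σ_{c,d} η^{cd} R_{cadb}, the Ricci scalar ℛ = Σ_{a,b} η^{ab} Ric_{ab}, and the Weyl tensor C_{abcd} = R_{abcd} − (1/(n−2))(η_{ac}Ric_{db} − η_{ad}Ric_{cb} − η_{bc}Ric_{da} + η_{bd}Ric_{ca}) + (ℛ/((n−1)(n−2)))(η_{ac}η_{db} − η_{ad}η_{cb}). Let u ∈ ℝⁿ be unit timelike and let ε ∈ {+1, −1}. Then θ_u·R = ε R if and only if both θ_u·C = ε C and θ_uᵀ Ric θ_u = ε Ric. (The Riemann tensor is purely electric, respectively purely magnetic, with respect to u if and only if both the Weyl and Ricci tensors are.) -/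

import Mathlib

open Matrix

noncomputable section

/-- The Minkowski metric `η = diag(-1, 1, …, 1)` on `ℝⁿ`. -/
def eta (n : ℕ) : Matrix (Fin n) (Fin n) ℝ :=
  Matrix.diagonal fun i => if i.val = 0 then (-1 : ℝ) else 1

/-- The reflection `θ_u = I + 2u(ηu)ᵀ` sending `u ↦ -u` and fixing `u^⊥`. -/
def theta {n : ℕ} (u : Fin n → ℝ) : Matrix (Fin n) (Fin n) ℝ :=
  1 + (2 : ℝ) • vecMulVec u ((eta n).mulVec u)

/-- The pullback action of a matrix `Λ` on rank-4 covariant tensors. -/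
def pull {n : ℕ} (Λ : Matrix (Fin n) (Fin n) ℝ)
    (R : Fin n → Fin n → Fin n → Fin n → ℝ) : Fin n → Fin n → Fin n → Fin n → ℝ :=
  fun a b c d => ∑ a', ∑ b', ∑ c', ∑ d',
    R a' b' c' d' * Λ a' a * Λ b' b * Λ c' c * Λ d' d

/-- The Ricci tensor `Ric_{ab} = η^{cd} R_{cadb}` of a Riemann candidate. -/
def ricci {n : ℕ} (R : Fin n → Fin n → Fin n → Fin n → ℝ) :
    Matrix (Fin n) (Fin n) ℝ :=
  Matrix.of fun a b => ∑ c, ∑ d, eta n c d * R c a d b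

/-- The Ricci scalar `ℛ = η^{ab} Ric_{ab}`. -/
def ricciScalar {n : ℕ} (R : Fin n → Fin n → Fin n → Fin n → ℝ) : ℝ :=
  ∑ a, ∑ b, eta n a b * ricci R a b

/-- The Weyl tensor of a Riemann candidate `R` in dimension `n`. -/
def weyl {n : ℕ} (R : Fin n → Fin n → Fin n → Fin n → ℝ) :
    Fin n → Fin n → Fin n → Fin n → ℝ :=
  fun a b c d =>
    R a b c d
      - (1 / ((n : ℝ) - 2)) *
          (eta n a c * ricci R d b - eta n a d * ricci R c b
            - eta n b c * ricci R d a + eta n b d * ricci R c a)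
      + (ricciScalar R / (((n : ℝ) - 1) * ((n : ℝ) - 2))) *
          (eta n a c * eta n d b - eta n a d * eta n c b)

section Mach
variable {n : ℕ}

lemma aux_ricci_apply {n : ℕ} (R : Fin n → Fin n → Fin n → Fin n → ℝ) (a b : Fin n) :
    ricci R a b = ∑ c, ∑ d, eta n c d * R c a d b := rfl

/-- contraction of a matrix over first indices of Λ. -/
lemma aux_contract (Λ f : Matrix (Fin n) (Fin n) ℝ) (a c : Fin n) :
    ∑ x, ∑ z, f x z * Λ x a * Λ z c = (Λᵀ * f * Λ) a c := by
  simp only [Matrix.mul_apply, Matrix.transpose_apply, Finset.sum_mul]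
  rw [Finset.sum_comm]
  exact Finset.sum_congr rfl fun z _ => Finset.sum_congr rfl fun x _ => by ring

lemma aux_prodA (F G : Fin n → Fin n → ℝ) :
    ∑ x, ∑ y, ∑ z, ∑ w, F x z * G w y = (∑ x, ∑ z, F x z) * (∑ w, ∑ y, G w y) := by
  have h : (∑ x, ∑ z, F x z) * (∑ w, ∑ y, G w y) = ∑ x, ∑ w, ∑ z, ∑ y, F x z * G w y := by
    rw [Fintype.sum_mul_sum]
    exact Finset.sum_congr rfl fun x _ => Finset.sum_congr rfl fun w _ => Fintype.sum_mul_sum _ _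
  rw [h]
  conv_lhs => enter [2, x]; rw [Finset.sum_comm]
  conv_lhs => enter [2, x, 2, z]; rw [Finset.sum_comm]
  conv_lhs => enter [2, x]; rw [Finset.sum_comm]

lemma aux_prodB (F G : Fin n → Fin n → ℝ) :
    ∑ x, ∑ y, ∑ z, ∑ w, F x w * G z y = (∑ x, ∑ w, F x w) * (∑ z, ∑ y, G z y) := by
  have h : (∑ x, ∑ w, F x w) * (∑ z, ∑ y, G z y) = ∑ x, ∑ z, ∑ w, ∑ y, F x w * G z y := by
    rw [Fintype.sum_mul_sum]
    exact Finset.sum_congr rfl fun x _ => Finset.sum_congr rfl fun z _ => Fintype.sum_mul_sum _ _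
  rw [h]
  conv_lhs => enter [2, x]; rw [Finset.sum_comm]
  conv_lhs => enter [2, x, 2, z]; rw [Finset.sum_comm]

lemma aux_prodC (F G : Fin n → Fin n → ℝ) :
    ∑ x, ∑ y, ∑ z, ∑ w, F y z * G w x = (∑ y, ∑ z, F y z) * (∑ w, ∑ x, G w x) := by
  have h : (∑ y, ∑ z, F y z) * (∑ w, ∑ x, G w x) = ∑ y, ∑ w, ∑ z, ∑ x, F y z * G w x := by
    rw [Fintype.sum_mul_sum]
    exact Finset.sum_congr rfl fun y _ => Finset.sum_congr rfl fun w _ => Fintype.sum_mul_sum _ _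
  rw [h]
  rw [Finset.sum_comm]
  conv_lhs => enter [2, y]; rw [Finset.sum_comm]
  conv_lhs => enter [2, y, 2, z]; rw [Finset.sum_comm]
  conv_lhs => enter [2, y]; rw [Finset.sum_comm]

lemma aux_prodD (F G : Fin n → Fin n → ℝ) :
    ∑ x, ∑ y, ∑ z, ∑ w, F y w * G z x = (∑ y, ∑ w, F y w) * (∑ z, ∑ x, G z x) := by
  have h : (∑ y, ∑ w, F y w) * (∑ z, ∑ x, G z x) = ∑ y, ∑ z, ∑ w, ∑ x, F y w * G z x := by
    rw [Fintype.sum_mul_sum]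
    exact Finset.sum_congr rfl fun y _ => Finset.sum_congr rfl fun z _ => Fintype.sum_mul_sum _ _
  rw [h]
  rw [Finset.sum_comm]
  conv_lhs => enter [2, y]; rw [Finset.sum_comm]
  conv_lhs => enter [2, y, 2, z]; rw [Finset.sum_comm]

/-- Ricci of the pullback is the congruence of Ricci. -/
lemma aux_ricci_pull (Λ : Matrix (Fin n) (Fin n) ℝ)
    (hL2 : ∀ a c, ∑ x, ∑ z, eta n x z * Λ a x * Λ c z = eta n a c)
    (R : Fin n → Fin n → Fin n → Fin n → ℝ) :
    ricci (pull Λ R) = Λᵀ * ricci R * Λ := by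
  ext a b
  show ∑ c, ∑ d, eta n c d * pull Λ R c a d b = _
  simp only [pull]
  simp only [Finset.mul_sum]
  -- order (c,d,x,y,z,w) → (y,w,x,z,c,d)
  conv_lhs => enter [2, c, 2, d]; rw [Finset.sum_comm]
  conv_lhs => enter [2, c]; rw [Finset.sum_comm]
  rw [Finset.sum_comm]
  conv_lhs => enter [2, y, 2, c, 2, d, 2, x]; rw [Finset.sum_comm]
  conv_lhs => enter [2, y, 2, c, 2, d]; rw [Finset.sum_comm]
  conv_lhs => enter [2, y, 2, c]; rw [Finset.sum_comm]
  conv_lhs => enter [2, y]; rw [Finset.sum_comm]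
  conv_lhs => enter [2, y, 2, w, 2, c]; rw [Finset.sum_comm]
  conv_lhs => enter [2, y, 2, w]; rw [Finset.sum_comm]
  conv_lhs => enter [2, y, 2, w, 2, x, 2, c]; rw [Finset.sum_comm]
  conv_lhs => enter [2, y, 2, w, 2, x]; rw [Finset.sum_comm]
  -- now LHS = ∑ y, ∑ w, ∑ x, ∑ z, ∑ c, ∑ d, η c d * (R x y z w * Λ x c * Λ y a * Λ z d * Λ w b)
  have inner : ∀ y w x z : Fin n,
      (∑ c, ∑ d, eta n c d * (R x y z w * Λ x c * Λ y a * Λ z d * Λ w b))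
        = eta n x z * R x y z w * Λ y a * Λ w b := by
    intro y w x z
    have e : (∑ c, ∑ d, eta n c d * (R x y z w * Λ x c * Λ y a * Λ z d * Λ w b))
        = (R x y z w * Λ y a * Λ w b) * ∑ c, ∑ d, eta n c d * Λ x c * Λ z d := by
      rw [Finset.mul_sum]
      refine Finset.sum_congr rfl fun cc _ => ?_
      rw [Finset.mul_sum]
      exact Finset.sum_congr rfl fun dd _ => by ring
    rw [e, hL2 x z]
    ring
  rw [Finset.sum_congr rfl fun y _ => Finset.sum_congr rfl fun w _ =>
    Finset.sum_congr rfl fun x _ => Finset.sum_congr rfl fun z _ => inner y w x z]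
  rw [← aux_contract Λ (ricci R) a b]
  refine Finset.sum_congr rfl fun y _ => Finset.sum_congr rfl fun w _ => ?_
  rw [aux_ricci_apply, Finset.sum_mul, Finset.sum_mul]
  refine Finset.sum_congr rfl fun x _ => ?_
  rw [Finset.sum_mul, Finset.sum_mul]

/-- Invariance of the η-trace under a Lorentz congruence. -/
lemma aux_scalar_congr (Λ : Matrix (Fin n) (Fin n) ℝ)
    (hL2 : ∀ a c, ∑ x, ∑ z, eta n x z * Λ a x * Λ c z = eta n a c)
    (M : Matrix (Fin n) (Fin n) ℝ) :
    ∑ a, ∑ b, eta n a b * (Λᵀ * M * Λ) a b = ∑ a, ∑ b, eta n a b * M a b := by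
  conv_lhs => enter [2, a, 2, b]; rw [← aux_contract Λ M a b]
  simp only [Finset.mul_sum]
  -- order (a,b,x,z) → (x,z,a,b)
  conv_lhs => enter [2, a]; rw [Finset.sum_comm]
  rw [Finset.sum_comm]
  conv_lhs => enter [2, x, 2, a]; rw [Finset.sum_comm]
  conv_lhs => enter [2, x]; rw [Finset.sum_comm]
  have inner : ∀ x z : Fin n,
      (∑ a, ∑ b, eta n a b * (M x z * Λ x a * Λ z b)) = eta n x z * M x z := by
    intro x z
    have e : (∑ a, ∑ b, eta n a b * (M x z * Λ x a * Λ z b))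
        = M x z * ∑ a, ∑ b, eta n a b * Λ x a * Λ z b := by
      rw [Finset.mul_sum]
      refine Finset.sum_congr rfl fun aa _ => ?_
      rw [Finset.mul_sum]
      exact Finset.sum_congr rfl fun bb _ => by ring
    rw [e, hL2 x z]
    ring
  rw [Finset.sum_congr rfl fun x _ => Finset.sum_congr rfl fun z _ => inner x z]


lemma aux_sum4_add (f g : Fin n → Fin n → Fin n → Fin n → ℝ) :
    (∑ x, ∑ y, ∑ z, ∑ w, (f x y z w + g x y z w))
      = (∑ x, ∑ y, ∑ z, ∑ w, f x y z w) + (∑ x, ∑ y, ∑ z, ∑ w, g x y z w) := by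
  simp [Finset.sum_add_distrib]

lemma aux_sum4_smul (k : ℝ) (f : Fin n → Fin n → Fin n → Fin n → ℝ) :
    (∑ x, ∑ y, ∑ z, ∑ w, k * f x y z w) = k * ∑ x, ∑ y, ∑ z, ∑ w, f x y z w := by
  simp [Finset.mul_sum]

/-- Pullback of the Weyl tensor. -/
lemma aux_pull_weyl (Λ : Matrix (Fin n) (Fin n) ℝ)
    (hL1 : ∀ a c, ∑ x, ∑ z, eta n x z * Λ x a * Λ z c = eta n a c)
    (R : Fin n → Fin n → Fin n → Fin n → ℝ) (a b c d : Fin n) :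
    pull Λ (weyl R) a b c d =
      pull Λ R a b c d
        - (1 / ((n : ℝ) - 2)) *
            (eta n a c * (Λᵀ * ricci R * Λ) d b - eta n a d * (Λᵀ * ricci R * Λ) c b
              - eta n b c * (Λᵀ * ricci R * Λ) d a + eta n b d * (Λᵀ * ricci R * Λ) c a)
        + (ricciScalar R / (((n : ℝ) - 1) * ((n : ℝ) - 2))) *
            (eta n a c * eta n d b - eta n a d * eta n c b) := by
  have E1 : ∑ x : Fin n, ∑ y, ∑ z, ∑ w,
      (eta n x z * Λ x a * Λ z c) * (ricci R w y * Λ w d * Λ y b)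
      = eta n a c * (Λᵀ * ricci R * Λ) d b := by
    rw [aux_prodA, hL1 a c, aux_contract]
  have E2 : ∑ x : Fin n, ∑ y, ∑ z, ∑ w,
      (eta n x w * Λ x a * Λ w d) * (ricci R z y * Λ z c * Λ y b)
      = eta n a d * (Λᵀ * ricci R * Λ) c b := by
    rw [aux_prodB, hL1 a d, aux_contract]
  have E3 : ∑ x : Fin n, ∑ y, ∑ z, ∑ w,
      (eta n y z * Λ y b * Λ z c) * (ricci R w x * Λ w d * Λ x a)
      = eta n b c * (Λᵀ * ricci R * Λ) d a := by
    rw [aux_prodC, hL1 b c, aux_contract]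
  have E4 : ∑ x : Fin n, ∑ y, ∑ z, ∑ w,
      (eta n y w * Λ y b * Λ w d) * (ricci R z x * Λ z c * Λ x a)
      = eta n b d * (Λᵀ * ricci R * Λ) c a := by
    rw [aux_prodD, hL1 b d, aux_contract]
  have E5 : ∑ x : Fin n, ∑ y, ∑ z, ∑ w,
      (eta n x z * Λ x a * Λ z c) * (eta n w y * Λ w d * Λ y b)
      = eta n a c * eta n d b := by
    rw [aux_prodA, hL1 a c, hL1 d b]
  have E6 : ∑ x : Fin n, ∑ y, ∑ z, ∑ w,
      (eta n x w * Λ x a * Λ w d) * (eta n z y * Λ z c * Λ y b)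
      = eta n a d * eta n c b := by
    rw [aux_prodB, hL1 a d, hL1 c b]
  have expand : pull Λ (weyl R) a b c d =
      ∑ x : Fin n, ∑ y, ∑ z, ∑ w,
        (R x y z w * Λ x a * Λ y b * Λ z c * Λ w d
          + (-(1 / ((n : ℝ) - 2))) * ((eta n x z * Λ x a * Λ z c) * (ricci R w y * Λ w d * Λ y b))
          + (1 / ((n : ℝ) - 2)) * ((eta n x w * Λ x a * Λ w d) * (ricci R z y * Λ z c * Λ y b))
          + (1 / ((n : ℝ) - 2)) * ((eta n y z * Λ y b * Λ z c) * (ricci R w x * Λ w d * Λ x a))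
          + (-(1 / ((n : ℝ) - 2))) * ((eta n y w * Λ y b * Λ w d) * (ricci R z x * Λ z c * Λ x a))
          + (ricciScalar R / (((n : ℝ) - 1) * ((n : ℝ) - 2))) * ((eta n x z * Λ x a * Λ z c) * (eta n w y * Λ w d * Λ y b))
          + (-(ricciScalar R / (((n : ℝ) - 1) * ((n : ℝ) - 2)))) * ((eta n x w * Λ x a * Λ w d) * (eta n z y * Λ z c * Λ y b))) := by
    refine Finset.sum_congr rfl fun x _ => Finset.sum_congr rfl fun y _ =>
      Finset.sum_congr rfl fun z _ => Finset.sum_congr rfl fun w _ => ?_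
    simp only [weyl]
    ring
  rw [expand, aux_sum4_add, aux_sum4_add, aux_sum4_add, aux_sum4_add, aux_sum4_add,
    aux_sum4_add, aux_sum4_smul, aux_sum4_smul, aux_sum4_smul, aux_sum4_smul,
    aux_sum4_smul, aux_sum4_smul]
  rw [E1, E2, E3, E4, E5, E6]
  have hP : (∑ x : Fin n, ∑ y, ∑ z, ∑ w, R x y z w * Λ x a * Λ y b * Λ z c * Λ w d)
      = pull Λ R a b c d := rfl
  rw [hP]
  ring

end Mach

section
variable {n : ℕ} (u : Fin n → ℝ)

lemma eta_apply (x y : Fin n) : eta n x y = if x = y then (if x.val = 0 then (-1:ℝ) else 1) else 0 := by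
  simp [eta, Matrix.diagonal_apply]

lemma eta_sq (x : Fin n) : (if x.val = 0 then (-1:ℝ) else 1) * (if x.val = 0 then (-1:ℝ) else 1) = 1 := by
  split_ifs <;> ring

lemma theta_apply (x y : Fin n) :
    theta u x y = (if x = y then (1:ℝ) else 0)
      + 2 * u x * ((if y.val = 0 then (-1:ℝ) else 1) * u y) := by
  simp [theta, Matrix.add_apply, Matrix.one_apply, vecMulVec, Matrix.mulVec, eta,
    diagonal_dotProduct]
  ring

lemma hu_sum (hu : u ⬝ᵥ (eta n).mulVec u = -1) :
    ∑ x, (if (x:Fin n).val = 0 then (-1:ℝ) else 1) * u x * u x = -1 := by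
  have h : u ⬝ᵥ (eta n).mulVec u = ∑ x, (if (x:Fin n).val = 0 then (-1:ℝ) else 1) * u x * u x := by
    simp only [dotProduct, eta, Matrix.mulVec_diagonal]
    exact Finset.sum_congr rfl fun x _ => by ring
  rw [← h, hu]

lemma hA (hu : u ⬝ᵥ (eta n).mulVec u = -1) (a c : Fin n) :
    ∑ x, ∑ z, eta n x z * theta u x a * theta u z c = eta n a c := by
  have e1 : ∀ x : Fin n, ∑ z, eta n x z * theta u x a * theta u z c
      = (if x.val = 0 then (-1:ℝ) else 1) * theta u x a * theta u x c := by
    intro x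
    rw [Finset.sum_eq_single x]
    · rw [eta_apply]; simp
    · intro z _ hz
      rw [eta_apply]; simp [Ne.symm hz]
    · simp
  rw [Finset.sum_congr rfl fun x _ => e1 x]
  have e2 : ∀ x : Fin n, (if x.val = 0 then (-1:ℝ) else 1) * theta u x a * theta u x c
      = (if x = a then (if x = c then (if x.val = 0 then (-1:ℝ) else 1) else 0) else 0)
        + ((if x = a then (if x.val = 0 then (-1:ℝ) else 1) * (2 * u x * ((if c.val = 0 then (-1:ℝ) else 1) * u c)) else 0)
        + ((if x = c then (if x.val = 0 then (-1:ℝ) else 1) * (2 * u x * ((if a.val = 0 then (-1:ℝ) else 1) * u a)) else 0)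
        + ((if x.val = 0 then (-1:ℝ) else 1) * u x * u x) * (4 * ((if a.val = 0 then (-1:ℝ) else 1) * u a) * ((if c.val = 0 then (-1:ℝ) else 1) * u c)))) := by
    intro x
    rw [theta_apply, theta_apply]
    by_cases h1 : x = a <;> by_cases h2 : x = c <;> simp_all <;> split_ifs <;> ring
  rw [Finset.sum_congr rfl fun x _ => e2 x]
  rw [Finset.sum_add_distrib, Finset.sum_add_distrib, Finset.sum_add_distrib,
    ← Finset.sum_mul, hu_sum u hu]
  simp only [Finset.sum_ite_eq', Finset.mem_univ, if_true, eta_apply]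
  by_cases h : a = c <;> simp [h] <;> (try split_ifs) <;> (try subst_vars) <;> (try simp_all) <;> (try ring)

lemma hB (hu : u ⬝ᵥ (eta n).mulVec u = -1) (a c : Fin n) :
    ∑ x, ∑ z, eta n x z * theta u a x * theta u c z = eta n a c := by
  have e1 : ∀ x : Fin n, ∑ z, eta n x z * theta u a x * theta u c z
      = (if x.val = 0 then (-1:ℝ) else 1) * theta u a x * theta u c x := by
    intro x
    rw [Finset.sum_eq_single x]
    · rw [eta_apply]; simp
    · intro z _ hz
      rw [eta_apply]; simp [Ne.symm hz]
    · simp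
  rw [Finset.sum_congr rfl fun x _ => e1 x]
  have e2 : ∀ x : Fin n, (if x.val = 0 then (-1:ℝ) else 1) * theta u a x * theta u c x
      = (if x = a then (if x = c then (if x.val = 0 then (-1:ℝ) else 1) else 0) else 0)
        + ((if x = a then 2 * u c * u x else 0)
        + ((if x = c then 2 * u a * u x else 0)
        + ((if x.val = 0 then (-1:ℝ) else 1) * u x * u x) * (4 * u a * u c))) := by
    intro x
    rw [theta_apply, theta_apply]
    by_cases h1 : x = a <;> by_cases h2 : x = c <;> subst_vars <;>
      simp_all [eq_comm] <;> split_ifs <;> (try subst_vars) <;> (try simp_all) <;> (try ring)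
  rw [Finset.sum_congr rfl fun x _ => e2 x]
  rw [Finset.sum_add_distrib, Finset.sum_add_distrib, Finset.sum_add_distrib,
    ← Finset.sum_mul, hu_sum u hu]
  simp only [Finset.sum_ite_eq', Finset.mem_univ, if_true, eta_apply]
  by_cases h : a = c <;> simp [h] <;> (try split_ifs) <;> (try subst_vars) <;> (try simp_all) <;> (try ring)

end


section Main
variable {n : ℕ}

lemma aux_ricci_smul (ε : ℝ) (R : Fin n → Fin n → Fin n → Fin n → ℝ) :
    ricci (fun a b c d => ε * R a b c d) = ε • ricci R := by
  ext a b
  show (∑ c, ∑ d, eta n c d * (ε * R c a d b)) = ε * ∑ c, ∑ d, eta n c d * R c a d b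
  rw [Finset.mul_sum]
  refine Finset.sum_congr rfl fun c _ => ?_
  rw [Finset.mul_sum]
  exact Finset.sum_congr rfl fun d _ => by ring

lemma aux_trace_smul (ε : ℝ) (M : Matrix (Fin n) (Fin n) ℝ) :
    ∑ a, ∑ b, eta n a b * (ε • M) a b = ε * ∑ a, ∑ b, eta n a b * M a b := by
  rw [Finset.mul_sum]
  refine Finset.sum_congr rfl fun a _ => ?_
  rw [Finset.mul_sum]
  refine Finset.sum_congr rfl fun b _ => ?_
  simp [Matrix.smul_apply]
  ring

/-- The Riemann tensor is purely electric (`ε = 1`), resp. purely magnetic (`ε = -1`),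
with respect to a unit timelike `u` iff both the Weyl and Ricci tensors are. -/
theorem stmt13 {n : ℕ} (hn : 3 ≤ n)
    (R : Fin n → Fin n → Fin n → Fin n → ℝ)
    (hanti1 : ∀ a b c d, R b a c d = -R a b c d)
    (hanti2 : ∀ a b c d, R a b d c = -R a b c d)
    (hpair : ∀ a b c d, R c d a b = R a b c d)
    (hbianchi : ∀ a b c d, R a b c d + R a c d b + R a d b c = 0)
    (u : Fin n → ℝ) (hu : u ⬝ᵥ (eta n).mulVec u = -1)
    (ε : ℝ) (hε : ε = 1 ∨ ε = -1) :
    pull (theta u) R = (fun a b c d => ε * R a b c d) ↔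
      (pull (theta u) (weyl R) = (fun a b c d => ε * weyl R a b c d) ∧
        (theta u)ᵀ * ricci R * theta u = ε • ricci R) := by
  have hL1 := hA u hu
  have hL2 := hB u hu
  constructor
  · intro h
    have hric : (theta u)ᵀ * ricci R * theta u = ε • ricci R := by
      rw [← aux_ricci_pull (theta u) hL2 R, h, aux_ricci_smul]
    have hs : ε * ricciScalar R = ricciScalar R := by
      have h1 := aux_scalar_congr (theta u) hL2 (ricci R)
      rw [hric, aux_trace_smul] at h1
      exact h1
    refine ⟨?_, hric⟩
    funext a b c d
    rw [aux_pull_weyl (theta u) hL1 R a b c d, hric]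
    have hpt : pull (theta u) R a b c d = ε * R a b c d := by rw [h]
    rw [hpt]
    simp only [weyl, Matrix.smul_apply, smul_eq_mul]
    linear_combination (-(eta n a c * eta n d b - eta n a d * eta n c b) /
      (((n : ℝ) - 1) * ((n : ℝ) - 2))) * hs
  · rintro ⟨hw, hric⟩
    have hs : ε * ricciScalar R = ricciScalar R := by
      have h1 := aux_scalar_congr (theta u) hL2 (ricci R)
      rw [hric, aux_trace_smul] at h1
      exact h1
    funext a b c d
    have h1 := aux_pull_weyl (theta u) hL1 R a b c d
    rw [hric, hw] at h1
    simp only [weyl, Matrix.smul_apply, smul_eq_mul] at h1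
    show pull (theta u) R a b c d = ε * R a b c d
    linear_combination ((eta n a c * eta n d b - eta n a d * eta n c b) /
      (((n : ℝ) - 1) * ((n : ℝ) - 2))) * hs - h1

end Main

end
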